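/- arXiv:2209.15117 — 3 statements merged into one kernel-verified Lean document; each statement's English description precedes it below -/
import Mathlib

section
/- (Lower bound of the 1/2-divergence.) For all constants 0 < c < C there exists K > 0, depending only on c and C, such that for all a, b ∈ [c, C], D_{1/2}(p_a, p_b) ≥ K (a − b)². -/
/-- The logistic function `x ↦ 1/(1 + e^{−x})`. -/
noncomputable def logistic (x : ℝ) : ℝ := 1 / (1 + Real.exp (-x))

/-- Rényi divergence of order `1/2` between `Bernoulli(p)` and `Bernoulli(q)`. -/
noncomputable def renyiHalf (p q : ℝ) : ℝ :=
  -2 * Real.log (Real.sqrt (p * q) + Real.sqrt ((1 - p) * (1 - q)))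

lemma logistic_pos (x : ℝ) : 0 < logistic x := by
  unfold logistic; positivity

lemma logistic_lt_one (x : ℝ) : logistic x < 1 := by
  unfold logistic
  rw [div_lt_one (by positivity)]
  linarith [Real.exp_pos (-x)]

lemma logistic_sub_ge {C a b : ℝ} (hb0 : 0 ≤ b) (hba : b ≤ a) (haC : a ≤ C) :
    Real.exp (-C) * (a - b) / 4 ≤ logistic a - logistic b := by
  have ha0 : 0 ≤ a := le_trans hb0 hba
  have hea : Real.exp (-a) ≤ 1 := Real.exp_le_one_iff.mpr (by linarith)
  have heb : Real.exp (-b) ≤ 1 := Real.exp_le_one_iff.mpr (by linarith)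
  have heapos := Real.exp_pos (-a)
  have hebpos := Real.exp_pos (-b)
  have hkey : logistic a - logistic b
      = (Real.exp (-b) - Real.exp (-a)) / ((1 + Real.exp (-a)) * (1 + Real.exp (-b))) := by
    unfold logistic
    field_simp
    ring
  rw [hkey]
  have hnum : Real.exp (-C) * (a - b) ≤ Real.exp (-b) - Real.exp (-a) := by
    have h1 : Real.exp (-a) * (1 + (a - b)) ≤ Real.exp (-b) := by
      have := Real.add_one_le_exp (a - b)
      calc Real.exp (-a) * (1 + (a - b)) ≤ Real.exp (-a) * Real.exp (a - b) := by
            nlinarith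
        _ = Real.exp (-b) := by rw [← Real.exp_add]; ring_nf
    have h2 : Real.exp (-C) ≤ Real.exp (-a) := Real.exp_le_exp.mpr (by linarith)
    nlinarith
  have hden : (1 + Real.exp (-a)) * (1 + Real.exp (-b)) ≤ 4 := by nlinarith
  have hdenpos : (0:ℝ) < (1 + Real.exp (-a)) * (1 + Real.exp (-b)) := by positivity
  have hnumnn : 0 ≤ Real.exp (-b) - Real.exp (-a) := by
    have := Real.exp_le_exp.mpr (neg_le_neg hba)
    linarith
  exact div_le_div₀ hnumnn hnum hdenpos hden

lemma renyiHalf_ge_sq {p q : ℝ} (hp0 : 0 < p) (hp1 : p < 1) (hq0 : 0 < q) (hq1 : q < 1) :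
    (p - q) ^ 2 / 4 ≤ renyiHalf p q := by
  set u := Real.sqrt p with hu
  set v := Real.sqrt q with hv
  set u' := Real.sqrt (1 - p) with hu'
  set v' := Real.sqrt (1 - q) with hv'
  have hu2 : u ^ 2 = p := Real.sq_sqrt hp0.le
  have hv2 : v ^ 2 = q := Real.sq_sqrt hq0.le
  have hu'2 : u' ^ 2 = 1 - p := Real.sq_sqrt (by linarith)
  have hv'2 : v' ^ 2 = 1 - q := Real.sq_sqrt (by linarith)
  have hunn : 0 ≤ u := Real.sqrt_nonneg _
  have hvnn : 0 ≤ v := Real.sqrt_nonneg _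
  have hu'nn : 0 ≤ u' := Real.sqrt_nonneg _
  have hv'nn : 0 ≤ v' := Real.sqrt_nonneg _
  have hu1 : u ≤ 1 := Real.sqrt_le_one.mpr hp1.le
  have hv1 : v ≤ 1 := Real.sqrt_le_one.mpr hq1.le
  have hmul1 : Real.sqrt (p * q) = u * v := Real.sqrt_mul hp0.le q
  have hmul2 : Real.sqrt ((1 - p) * (1 - q)) = u' * v' :=
    Real.sqrt_mul (by linarith) (1 - q)
  set s := Real.sqrt (p * q) + Real.sqrt ((1 - p) * (1 - q)) with hs
  have hspos : 0 < s := by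
    rw [hs, hmul1]
    have h : 0 < u * v := by
      have hupos : 0 < u := Real.sqrt_pos.mpr hp0
      have hvpos : 0 < v := Real.sqrt_pos.mpr hq0
      exact mul_pos hupos hvpos
    nlinarith [Real.sqrt_nonneg ((1 - p) * (1 - q))]
  have hlog : Real.log s ≤ s - 1 := Real.log_le_sub_one_of_pos hspos
  have h1 : 2 - 2 * s ≤ renyiHalf p q := by
    unfold renyiHalf
    rw [← hs]
    linarith
  have hsum : 2 - 2 * s = (u - v) ^ 2 + (u' - v') ^ 2 := by
    rw [hs, hmul1, hmul2]
    linear_combination (-1 : ℝ) * hu2 - hv2 - hu'2 - hv'2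
  have h2 : (p - q) ^ 2 / 4 ≤ 2 - 2 * s := by
    rw [hsum]
    have hfac : p - q = (u - v) * (u + v) := by rw [← hu2, ← hv2]; ring
    have h3 : (p - q) ^ 2 ≤ (u - v) ^ 2 * 4 := by
      rw [hfac]
      have habs : (u + v) ^ 2 ≤ 4 := by nlinarith
      have h4 := sq_nonneg (u - v)
      calc ((u - v) * (u + v)) ^ 2 = (u - v) ^ 2 * (u + v) ^ 2 := by ring
        _ ≤ (u - v) ^ 2 * 4 := by nlinarith
    nlinarith [sq_nonneg (u' - v')]
  linarith

/-- Lower bound of the `1/2`-divergence: for `a, b` in a compact interval `[c, C]` with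
`0 < c < C`, `D_{1/2}(p_a, p_b) ≥ K (a − b)²` for some `K > 0` depending only on `c, C`. -/
theorem renyiHalf_lower_bound (c C : ℝ) (hc : 0 < c) (hcC : c < C) :
    ∃ K : ℝ, 0 < K ∧ ∀ a b : ℝ, a ∈ Set.Icc c C → b ∈ Set.Icc c C →
      K * (a - b) ^ 2 ≤ renyiHalf (logistic a) (logistic b) := by
  refine ⟨Real.exp (-C) ^ 2 / 64, by positivity, ?_⟩
  have key : ∀ a b : ℝ, a ∈ Set.Icc c C → b ∈ Set.Icc c C → b ≤ a →
      Real.exp (-C) ^ 2 / 64 * (a - b) ^ 2 ≤ renyiHalf (logistic a) (logistic b) := by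
    intro a b ha hb hba
    have hsub := logistic_sub_ge (C := C) (le_of_lt (lt_of_lt_of_le hc hb.1)) hba ha.2
    have hmain := renyiHalf_ge_sq (logistic_pos a) (logistic_lt_one a)
      (logistic_pos b) (logistic_lt_one b)
    have hnn : 0 ≤ Real.exp (-C) * (a - b) / 4 := by
      have := Real.exp_pos (-C); nlinarith
    have hsq : (Real.exp (-C) * (a - b) / 4) ^ 2 ≤ (logistic a - logistic b) ^ 2 :=
      pow_le_pow_left₀ hnn hsub 2
    calc Real.exp (-C) ^ 2 / 64 * (a - b) ^ 2
        = (Real.exp (-C) * (a - b) / 4) ^ 2 / 4 * (4/16 * 4) := by ring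
      _ = (Real.exp (-C) * (a - b) / 4) ^ 2 / 4 := by ring
      _ ≤ (logistic a - logistic b) ^ 2 / 4 := by linarith
      _ ≤ renyiHalf (logistic a) (logistic b) := hmain
  intro a b ha hb
  rcases le_total b a with h | h
  · exact key a b ha hb h
  · have := key b a hb ha h
    have hsymm : renyiHalf (logistic a) (logistic b) = renyiHalf (logistic b) (logistic a) := by
      unfold renyiHalf
      rw [mul_comm (logistic a), mul_comm (1 - logistic a)]
    rw [hsymm]
    have : (a - b) ^ 2 = (b - a) ^ 2 := by ring
    linarith [key b a hb ha h]
end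

section
/- (Sparse Varshamov–Gilbert bound.) Let n and s be integers with 1 ≤ s ≤ n/4. Then there exists a finite subset {w^{(1)}, …, w^{(M)}} of {0,1}^n such that: (i) each w^{(i)} has exactly s nonzero coordinates; (ii) the Hamming distance between w^{(i)} and w^{(j)} is at least s/2 for all 1 ≤ i ≠ j ≤ M; and (iii) log M ≥ 0.233 · s · log(n/s). -/
open Finset

lemma ball_card_bound {s q : ℕ} (hq : 4 ≤ q) (r : ℕ) (c : Fin s → Fin q) :
    (((Finset.univ.filter fun u : Fin s → Fin q =>
        (Finset.univ.filter fun i => u i ≠ c i).card ≤ r).card : ℝ))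
      ≤ (3*q)^r * (4/3)^s := by
  classical
  have hq' : (4:ℝ) ≤ q := by exact_mod_cast hq
  have hq0 : (0:ℝ) < q := by linarith
  set lam : ℝ := 1/(3*q) with hlam
  have hlam0 : 0 < lam := by positivity
  have hlam1 : lam ≤ 1 := by
    rw [hlam, div_le_one (by positivity)]; nlinarith
  have key : ∀ u : Fin s → Fin q,
      (∏ i, if u i = c i then (1:ℝ) else lam)
        = lam ^ (Finset.univ.filter fun i => u i ≠ c i).card := by
    intro u
    rw [Finset.prod_ite (fun _ => (1:ℝ)) (fun _ => lam), Finset.prod_const_one,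
      Finset.prod_const, one_mul]
  have sum_eq : (∑ u : Fin s → Fin q, ∏ i, if u i = c i then (1:ℝ) else lam)
      = (1 + ((q:ℝ)-1)*lam)^s := by
    rw [show (Finset.univ : Finset (Fin s → Fin q)) = Fintype.piFinset (fun _ => univ) from
        (Fintype.piFinset_univ).symm,
      ← Finset.prod_univ_sum (fun _ => (univ : Finset (Fin q)))
        (fun i a => if a = c i then (1:ℝ) else lam)]
    have : ∀ i : Fin s, (∑ a : Fin q, if a = c i then (1:ℝ) else lam)
        = 1 + ((q:ℝ)-1)*lam := by
      intro i
      have : (∑ a : Fin q, if a = c i then (1:ℝ) else lam)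
          = ∑ a : Fin q, (lam + if a = c i then (1:ℝ) - lam else 0) := by
        apply Finset.sum_congr rfl; intro a _; by_cases h : a = c i <;> simp [h]
      rw [this, Finset.sum_add_distrib, Finset.sum_const, Finset.sum_ite_eq']
      simp [Fintype.card_fin]
      ring
    rw [Finset.prod_congr rfl (fun i _ => this i), Finset.prod_const]
    simp
  have step1 : ((Finset.univ.filter fun u : Fin s → Fin q =>
        (Finset.univ.filter fun i => u i ≠ c i).card ≤ r).card : ℝ) * lam ^ r
      ≤ (1 + ((q:ℝ)-1)*lam)^s := by
    rw [← sum_eq]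
    calc ((Finset.univ.filter fun u : Fin s → Fin q =>
        (Finset.univ.filter fun i => u i ≠ c i).card ≤ r).card : ℝ) * lam ^ r
        = ∑ u ∈ (Finset.univ.filter fun u : Fin s → Fin q =>
            (Finset.univ.filter fun i => u i ≠ c i).card ≤ r), lam ^ r := by
          rw [Finset.sum_const, nsmul_eq_mul]
      _ ≤ ∑ u ∈ (Finset.univ.filter fun u : Fin s → Fin q =>
            (Finset.univ.filter fun i => u i ≠ c i).card ≤ r),
            lam ^ (Finset.univ.filter fun i => u i ≠ c i).card := by
          apply Finset.sum_le_sum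
          intro u hu
          simp only [Finset.mem_filter] at hu
          exact pow_le_pow_of_le_one hlam0.le hlam1 hu.2
      _ ≤ ∑ u : Fin s → Fin q, lam ^ (Finset.univ.filter fun i => u i ≠ c i).card := by
          apply Finset.sum_le_sum_of_subset_of_nonneg (Finset.filter_subset _ _)
          intro u _ _; positivity
      _ = ∑ u : Fin s → Fin q, ∏ i, if u i = c i then (1:ℝ) else lam :=
          Finset.sum_congr rfl (fun u _ => (key u).symm)
  have hbase : (1 + ((q:ℝ)-1)*lam) ≤ 4/3 := by
    have h1 : ((q:ℝ)-1)*lam ≤ 1/3 := by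
      rw [hlam, mul_one_div, div_le_div_iff₀ (by positivity) (by norm_num)]
      nlinarith
    linarith
  have h2 : (1 + ((q:ℝ)-1)*lam)^s ≤ (4/3)^s :=
    pow_le_pow_left₀ (by nlinarith) hbase s
  have h3 : ((Finset.univ.filter fun u : Fin s → Fin q =>
        (Finset.univ.filter fun i => u i ≠ c i).card ≤ r).card : ℝ) * lam ^ r ≤ (4/3)^s :=
    step1.trans h2
  have hinv : lam ^ r * (3*(q:ℝ))^r = 1 := by
    rw [← mul_pow, hlam]
    field_simp
    exact one_pow r
  calc ((Finset.univ.filter fun u : Fin s → Fin q =>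
        (Finset.univ.filter fun i => u i ≠ c i).card ≤ r).card : ℝ)
      = ((Finset.univ.filter fun u : Fin s → Fin q =>
        (Finset.univ.filter fun i => u i ≠ c i).card ≤ r).card : ℝ)
          * (lam ^ r * (3*(q:ℝ))^r) := by rw [hinv, mul_one]
    _ = (((Finset.univ.filter fun u : Fin s → Fin q =>
        (Finset.univ.filter fun i => u i ≠ c i).card ≤ r).card : ℝ) * lam ^ r)
          * (3*(q:ℝ))^r := by ring
    _ ≤ (4/3)^s * (3*(q:ℝ))^r := mul_le_mul_of_nonneg_right h3 (by positivity)
    _ = (3*q)^r * (4/3)^s := by ring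

lemma numeric_ineq {q : ℝ} (hq : 4 ≤ q) :
    0.233 * Real.log (q+1) ≤ 0.75 * Real.log q - 0.25 * Real.log 3 - Real.log (4/3) := by
  have hq0 : (0:ℝ) < q := by linarith
  have h1 : Real.log (q+1) ≤ Real.log q + Real.log (5/4) := by
    rw [← Real.log_mul (ne_of_gt hq0) (by norm_num)]
    exact Real.log_le_log (by linarith) (by nlinarith)
  have h54 : Real.log (5/4) ≤ 0.25 := by
    have := Real.log_le_sub_one_of_pos (show (0:ℝ) < 5/4 by norm_num); linarith
  have h43 : Real.log (4/3) ≤ 1/3 := by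
    have := Real.log_le_sub_one_of_pos (show (0:ℝ) < 4/3 by norm_num); linarith
  have h32 : Real.log (3/2) ≤ 1/2 := by
    have := Real.log_le_sub_one_of_pos (show (0:ℝ) < 3/2 by norm_num); linarith
  have l3 : Real.log 3 ≤ Real.log 2 + 1/2 := by
    rw [show (3:ℝ) = 2 * (3/2) by norm_num, Real.log_mul two_ne_zero (by norm_num)]
    linarith
  have l2u : Real.log 2 < 0.6931471808 := Real.log_two_lt_d9
  have l2l : (0.6931471803:ℝ) < Real.log 2 := Real.log_two_gt_d9
  have hq4 : Real.log 4 ≤ Real.log q := Real.log_le_log (by norm_num) hq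
  have l4 : Real.log 4 = 2 * Real.log 2 := by
    rw [show (4:ℝ) = 2^2 by norm_num, Real.log_pow]; push_cast; ring
  nlinarith [hq4, h1]

lemma exists_maximal_code (s q d : ℕ) (hd : 1 ≤ d) :
    ∃ C : Finset (Fin s → Fin q),
      (∀ x ∈ C, ∀ y ∈ C, x ≠ y → d ≤ (Finset.univ.filter fun i => x i ≠ y i).card) ∧
      (∀ v : Fin s → Fin q, ∃ c ∈ C,
        (Finset.univ.filter fun i => v i ≠ c i).card ≤ d - 1) := by
  classical
  set P : Finset (Fin s → Fin q) → Prop := fun C =>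
    ∀ x ∈ C, ∀ y ∈ C, x ≠ y → d ≤ (Finset.univ.filter fun i => x i ≠ y i).card with hP
  have hT : ((Finset.univ : Finset (Finset (Fin s → Fin q))).filter P).Nonempty := by
    refine ⟨∅, ?_⟩
    simp [hP]
  obtain ⟨C, hCmem, hCmax⟩ := Finset.exists_max_image _ Finset.card hT
  rw [Finset.mem_filter] at hCmem
  have hC : P C := hCmem.2
  refine ⟨C, hC, ?_⟩
  intro v
  by_contra hcon
  push_neg at hcon
  have hfar : ∀ c ∈ C, d ≤ (Finset.univ.filter fun i => v i ≠ c i).card := by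
    intro c hc
    have := hcon c hc
    omega
  have hvC : v ∉ C := by
    intro hv
    have := hfar v hv
    simp at this
    omega
  have hins : P (insert v C) := by
    intro x hx y hy hxy
    rcases Finset.mem_insert.mp hx with rfl | hx'
    · rcases Finset.mem_insert.mp hy with rfl | hy'
      · exact absurd rfl hxy
      · exact hfar y hy'
    · rcases Finset.mem_insert.mp hy with rfl | hy'
      · have h := hfar x hx'
        have : (Finset.univ.filter fun i => x i ≠ y i)
            = (Finset.univ.filter fun i => y i ≠ x i) := by
          apply Finset.filter_congr
          intro i _
          simp [ne_comm]
        rw [this]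
        exact h
      · exact hC x hx' y hy' hxy
  have hmem : insert v C ∈ (Finset.univ : Finset (Finset (Fin s → Fin q))).filter P := by
    rw [Finset.mem_filter]
    exact ⟨Finset.mem_univ _, hins⟩
  have := hCmax _ hmem
  rw [Finset.card_insert_of_notMem hvC] at this
  omega

lemma block_div {q j r : ℕ} (hq : 0 < q) (hr : r < q) :
    (j * q + r) / q = j ∧ (j * q + r) % q = r := by
  constructor
  · rw [mul_comm, Nat.mul_add_div hq, Nat.div_eq_of_lt hr, add_zero]
  · rw [mul_comm, Nat.mul_add_mod, Nat.mod_eq_of_lt hr]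

lemma block_inj {q j j' r r' : ℕ} (hq : 0 < q) (hr : r < q) (hr' : r' < q)
    (h : j * q + r = j' * q + r') : j = j' ∧ r = r' := by
  have h1 := (block_div hq hr (j := j)).1
  have h2 := (block_div hq hr (j := j)).2
  rw [h, (block_div hq hr' (j := j')).1] at h1
  rw [h, (block_div hq hr' (j := j')).2] at h2
  exact ⟨h1.symm, h2.symm⟩

set_option maxHeartbeats 1000000 in
/-- Sparse Varshamov–Gilbert bound: for `1 ≤ s ≤ n/4` there exist binary vectors
`w⁽¹⁾, …, w⁽ᴹ⁾ ∈ {0,1}ⁿ`, each with exactly `s` nonzero coordinates, pairwise Hamming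
distance at least `s/2`, and `log M ≥ 0.233 · s · log(n/s)`. -/
theorem sparse_varshamov_gilbert (n s : ℕ) (hs : 1 ≤ s) (hsn : (s : ℝ) ≤ (n : ℝ) / 4) :
    ∃ (M : ℕ) (w : Fin M → (Fin n → Bool)),
      (∀ i : Fin M, (Finset.univ.filter fun k => w i k = true).card = s)
      ∧ (∀ i j : Fin M, i ≠ j →
          (s : ℝ) / 2 ≤ ((Finset.univ.filter fun k => w i k ≠ w j k).card : ℝ))
      ∧ 0.233 * s * Real.log ((n : ℝ) / s) ≤ Real.log M := by
  classical
  have hs0 : 0 < s := hs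
  have hn4 : 4 * s ≤ n := by
    have h : ((4 * s : ℕ) : ℝ) ≤ (n : ℝ) := by push_cast; linarith
    exact_mod_cast h
  set q := n / s with hqdef
  have hq4 : 4 ≤ q := by
    rw [hqdef, Nat.le_div_iff_mul_le hs0]; omega
  have hq0 : 0 < q := by omega
  set d := (s + 3) / 4 with hddef
  have hd1 : 1 ≤ d := by omega
  have h4d : s ≤ 4 * d := by omega
  have hd1s : 4 * (d - 1) ≤ s := by omega
  have hsq : s * q ≤ n := by rw [hqdef, mul_comm]; exact Nat.div_mul_le_self n s
  have hnlt : n < (q + 1) * s := by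
    have h1 : s * q + n % s = n := by rw [hqdef]; exact Nat.div_add_mod n s
    have h2 : n % s < s := Nat.mod_lt n hs0
    nlinarith
  obtain ⟨C, hCsep, hCcov⟩ := exists_maximal_code s q d hd1
  set M := C.card with hMdef
  set x : Fin M → (Fin s → Fin q) := fun i => (C.equivFin.symm i : Fin s → Fin q) with hxdef
  have hxmem : ∀ i, x i ∈ C := fun i => (C.equivFin.symm i).2
  have hxinj : Function.Injective x := by
    intro i j h
    exact C.equivFin.symm.injective (Subtype.ext h)
  set w : Fin M → Fin n → Bool := fun i k =>
    decide (∃ j : Fin s, (k : ℕ) = (j : ℕ) * q + (x i j : ℕ)) with hwdef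
  have hwlt : ∀ (i : Fin M) (j : Fin s), (j : ℕ) * q + (x i j : ℕ) < n := by
    intro i j
    have hj := j.isLt
    have hxj := (x i j).isLt
    have : (j : ℕ) * q + (x i j : ℕ) < s * q := by nlinarith
    omega
  have hwtrue : ∀ (i : Fin M) (k : Fin n),
      w i k = true ↔ ∃ j : Fin s, (k : ℕ) = (j : ℕ) * q + (x i j : ℕ) := by
    intro i k; simp [hwdef]
  have key : ∀ (a : Fin M) (t : Fin s) (v : Fin q) (h : (t : ℕ) * q + (v : ℕ) < n),
      (w a ⟨(t : ℕ) * q + (v : ℕ), h⟩ = true) ↔ x a t = v := by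
    intro a t v h
    rw [hwtrue]
    constructor
    · rintro ⟨t', ht'⟩
      have ht'' : (t : ℕ) * q + (v : ℕ) = (t' : ℕ) * q + ((x a t') : ℕ) := ht'
      obtain ⟨h1, h2⟩ := block_inj hq0 v.isLt (x a t').isLt ht''
      have h3 : t = t' := Fin.ext h1
      subst h3
      exact (Fin.ext h2).symm
    · intro h'
      exact ⟨t, by rw [h']⟩
  refine ⟨M, w, ?_, ?_, ?_⟩
  · -- (i) exact weight s
    intro i
    have himg : (Finset.univ.filter fun k => w i k = true)
        = Finset.univ.image (fun j : Fin s => (⟨(j : ℕ) * q + (x i j : ℕ), hwlt i j⟩ : Fin n)) := by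
      ext k
      simp only [Finset.mem_filter, Finset.mem_univ, true_and, Finset.mem_image]
      rw [hwtrue]
      constructor
      · rintro ⟨j, hj⟩
        exact ⟨j, by ext; exact hj.symm⟩
      · rintro ⟨j, hj⟩
        exact ⟨j, by rw [← hj]⟩
    rw [himg, Finset.card_image_of_injective _ ?_, Finset.card_univ, Fintype.card_fin]
    intro a b hab
    have hab' : (a : ℕ) * q + (x i a : ℕ) = (b : ℕ) * q + (x i b : ℕ) :=
      congrArg Fin.val hab
    exact Fin.ext (block_inj hq0 (x i a).isLt (x i b).isLt hab').1
  · -- (ii) distance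
    intro i j hij
    have hxij : x i ≠ x j := fun h => hij (hxinj h)
    set D := Finset.univ.filter fun t : Fin s => x i t ≠ x j t with hDdef
    have hDd : d ≤ D.card := hCsep _ (hxmem i) _ (hxmem j) hxij
    set f1 : Fin s → Fin n := fun t => ⟨(t : ℕ) * q + (x i t : ℕ), hwlt i t⟩ with hf1
    set f2 : Fin s → Fin n := fun t => ⟨(t : ℕ) * q + (x j t : ℕ), hwlt j t⟩ with hf2
    have hw1 : ∀ t, w i (f1 t) = true := fun t => (key i t (x i t) (hwlt i t)).mpr rfl
    have hw2 : ∀ t, w j (f2 t) = true := fun t => (key j t (x j t) (hwlt j t)).mpr rfl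
    have hw12 : ∀ t ∈ D, w j (f1 t) = false := by
      intro t ht
      rw [hDdef, Finset.mem_filter] at ht
      by_contra hcon
      have hcon' : w j (f1 t) = true := by
        cases hh : w j (f1 t)
        · exact absurd hh hcon
        · rfl
      exact ht.2 ((key j t (x i t) (hwlt i t)).mp hcon').symm
    have hw21 : ∀ t ∈ D, w i (f2 t) = false := by
      intro t ht
      rw [hDdef, Finset.mem_filter] at ht
      by_contra hcon
      have hcon' : w i (f2 t) = true := by
        cases hh : w i (f2 t)
        · exact absurd hh hcon
        · rfl
      exact ht.2 ((key i t (x j t) (hwlt j t)).mp hcon')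
    have hsub : D.image f1 ∪ D.image f2 ⊆ Finset.univ.filter fun k => w i k ≠ w j k := by
      intro k hk
      rw [Finset.mem_union] at hk
      rw [Finset.mem_filter]
      refine ⟨Finset.mem_univ _, ?_⟩
      rcases hk with hk | hk <;> obtain ⟨t, ht, rfl⟩ := Finset.mem_image.mp hk
      · rw [hw1 t, hw12 t ht]; simp
      · rw [hw2 t, hw21 t ht]; simp
    have hdisj : Disjoint (D.image f1) (D.image f2) := by
      rw [Finset.disjoint_left]
      intro k hk1 hk2
      obtain ⟨t, ht, rfl⟩ := Finset.mem_image.mp hk1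
      obtain ⟨t', ht', heq⟩ := Finset.mem_image.mp hk2
      have heq' : (t' : ℕ) * q + (x j t' : ℕ) = (t : ℕ) * q + (x i t : ℕ) :=
        congrArg Fin.val heq
      obtain ⟨h1, h2⟩ := block_inj hq0 (x j t').isLt (x i t).isLt heq'
      have h3 : t' = t := Fin.ext h1
      subst h3
      rw [hDdef, Finset.mem_filter] at ht
      exact ht.2 (Fin.ext h2).symm
    have hinj1 : Function.Injective f1 := by
      intro a b hab
      exact Fin.ext (block_inj hq0 (x i a).isLt (x i b).isLt (congrArg Fin.val hab)).1
    have hinj2 : Function.Injective f2 := by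
      intro a b hab
      exact Fin.ext (block_inj hq0 (x j a).isLt (x j b).isLt (congrArg Fin.val hab)).1
    have hcard : 2 * D.card ≤ (Finset.univ.filter fun k => w i k ≠ w j k).card := by
      calc 2 * D.card = (D.image f1).card + (D.image f2).card := by
            rw [Finset.card_image_of_injective _ hinj1,
              Finset.card_image_of_injective _ hinj2]
            ring
        _ = (D.image f1 ∪ D.image f2).card := (Finset.card_union_of_disjoint hdisj).symm
        _ ≤ _ := Finset.card_le_card hsub
    have h1 : (s : ℝ) ≤ 4 * d := by exact_mod_cast h4d
    have h2 : (d : ℝ) ≤ D.card := by exact_mod_cast hDd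
    have h3 : ((2 * D.card : ℕ) : ℝ)
        ≤ ((Finset.univ.filter fun k => w i k ≠ w j k).card : ℝ) := by exact_mod_cast hcard
    push_cast at h3
    linarith
  · -- (iii) log bound
    have hcard_univ : Fintype.card (Fin s → Fin q) = q ^ s := by
      simp [Fintype.card_fun]
    have cover_sub : (Finset.univ : Finset (Fin s → Fin q)) ⊆ C.biUnion
        (fun c => Finset.univ.filter fun v =>
          (Finset.univ.filter fun t => v t ≠ c t).card ≤ d - 1) := by
      intro v _
      rw [Finset.mem_biUnion]
      obtain ⟨c, hc, hle⟩ := hCcov v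
      exact ⟨c, hc, Finset.mem_filter.mpr ⟨Finset.mem_univ _, hle⟩⟩
    have hnat : q ^ s ≤ ∑ c ∈ C, (Finset.univ.filter fun v : Fin s → Fin q =>
        (Finset.univ.filter fun t => v t ≠ c t).card ≤ d - 1).card := by
      calc q ^ s = (Finset.univ : Finset (Fin s → Fin q)).card := by
            rw [Finset.card_univ, hcard_univ]
        _ ≤ _ := (Finset.card_le_card cover_sub).trans Finset.card_biUnion_le
    have hreal : (q : ℝ) ^ s ≤ (M : ℝ) * ((3 * (q : ℝ)) ^ (d - 1) * (4 / 3) ^ s) := by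
      have h1 : ((q ^ s : ℕ) : ℝ) ≤ ((∑ c ∈ C, (Finset.univ.filter fun v : Fin s → Fin q =>
          (Finset.univ.filter fun t => v t ≠ c t).card ≤ d - 1).card : ℕ) : ℝ) := by
        exact_mod_cast hnat
      push_cast at h1
      calc (q : ℝ) ^ s ≤ ∑ c ∈ C, ((Finset.univ.filter fun v : Fin s → Fin q =>
          (Finset.univ.filter fun t => v t ≠ c t).card ≤ d - 1).card : ℝ) := h1
        _ ≤ ∑ _c ∈ C, (3 * (q : ℝ)) ^ (d - 1) * (4 / 3) ^ s :=
            Finset.sum_le_sum (fun c _ => ball_card_bound hq4 (d - 1) c)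
        _ = (M : ℝ) * ((3 * (q : ℝ)) ^ (d - 1) * (4 / 3) ^ s) := by
            rw [Finset.sum_const, nsmul_eq_mul, hMdef]
    have hq' : (4 : ℝ) ≤ q := by exact_mod_cast hq4
    have hqpos : (0 : ℝ) < q := by linarith
    have hs1 : (1 : ℝ) ≤ (s : ℝ) := by exact_mod_cast hs
    have hB : (0 : ℝ) < (3 * (q : ℝ)) ^ (d - 1) * (4 / 3) ^ s := by positivity
    have hM0 : (0 : ℝ) < M := by
      by_contra hcon
      push_neg at hcon
      have hle : (M : ℝ) * ((3 * (q : ℝ)) ^ (d - 1) * (4 / 3) ^ s) ≤ 0 :=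
        mul_nonpos_of_nonpos_of_nonneg hcon hB.le
      have hqs : (0 : ℝ) < (q : ℝ) ^ s := by positivity
      linarith
    have hlog : (s : ℝ) * Real.log q ≤ Real.log M
        + ((d - 1 : ℕ) : ℝ) * Real.log (3 * q) + (s : ℝ) * Real.log (4 / 3) := by
      have h := Real.log_le_log (by positivity) hreal
      rw [Real.log_pow, Real.log_mul (by linarith) (by positivity),
        Real.log_mul (by positivity) (by positivity), Real.log_pow, Real.log_pow] at h
      linarith
    have hd14 : ((d - 1 : ℕ) : ℝ) ≤ (s : ℝ) / 4 := by
      have h : ((4 * (d - 1) : ℕ) : ℝ) ≤ (s : ℝ) := by exact_mod_cast hd1s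
      push_cast at h
      linarith
    have hlog3q : Real.log (3 * (q : ℝ)) = Real.log 3 + Real.log q :=
      Real.log_mul (by norm_num) (by linarith)
    have hlogq0 : 0 ≤ Real.log q := Real.log_nonneg (by linarith)
    have hlog30 : 0 ≤ Real.log 3 := Real.log_nonneg (by norm_num)
    have hnum := numeric_ineq hq'
    have hns : (n : ℝ) / s ≤ (q : ℝ) + 1 := by
      rw [div_le_iff₀ (by exact_mod_cast hs0)]
      have h : (n : ℝ) < (((q + 1) * s : ℕ) : ℝ) := by exact_mod_cast hnlt
      push_cast at h
      linarith
    have hns0 : (0 : ℝ) < (n : ℝ) / s := by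
      have h4 : (4 : ℝ) * s ≤ n := by exact_mod_cast hn4
      apply div_pos (by nlinarith) (by exact_mod_cast hs0)
    have hlogns : Real.log ((n : ℝ) / s) ≤ Real.log ((q : ℝ) + 1) :=
      Real.log_le_log hns0 hns
    calc 0.233 * (s : ℝ) * Real.log ((n : ℝ) / s)
        ≤ 0.233 * (s : ℝ) * Real.log ((q : ℝ) + 1) := by
          apply mul_le_mul_of_nonneg_left hlogns (by positivity)
      _ = (s : ℝ) * (0.233 * Real.log ((q : ℝ) + 1)) := by ring
      _ ≤ (s : ℝ) * (0.75 * Real.log q - 0.25 * Real.log 3 - Real.log (4 / 3)) := by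
          apply mul_le_mul_of_nonneg_left hnum (by positivity)
      _ ≤ Real.log M := by
          have hbound : ((d - 1 : ℕ) : ℝ) * Real.log (3 * (q : ℝ))
              ≤ ((s : ℝ) / 4) * (Real.log 3 + Real.log q) := by
            rw [hlog3q]
            apply mul_le_mul_of_nonneg_right hd14 (by linarith)
          nlinarith [hlog, hbound]
end

section
/- (Separation of the constructed test hypotheses.) Let q, s ≥ 1 be integers and ε > 0. Let w¹, w² ∈ {0,1}^q each have exactly s nonzero coordinates, and suppose the Hamming distance between w¹ and w² is at least s/2. Then Σ_{1 ≤ i ≠ j ≤ 2q} ( v^{w¹}_i v^{w¹}_j − v^{w²}_i v^{w²}_j )² ≥ s q ε² / 2, where the sum is over ordered pairs (i, j) with i ≠ j. -/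
/-- The constructed vector `v^w ∈ ℝ^{2q}`: first `q` coordinates equal to `1`, and
coordinate `q+i` equal to `ε·w_i`. -/
noncomputable def vConstr (q : ℕ) (ε : ℝ) (w : Fin q → Bool) (i : Fin (2 * q)) : ℝ :=
  if h : (i : ℕ) < q then 1
  else ε * (if w ⟨(i : ℕ) - q, by have := i.isLt; omega⟩ then 1 else 0)

set_option maxHeartbeats 1000000 in
/-- Separation of the constructed test hypotheses: if `w¹, w²` each have exactly `s`
nonzero coordinates and Hamming distance at least `s/2`, then
`Σ_{i ≠ j} (v^{w¹}_i v^{w¹}_j − v^{w²}_i v^{w²}_j)² ≥ s q ε² / 2`. -/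
theorem separation_of_hypotheses (q s : ℕ) (hq : 1 ≤ q) (hs : 1 ≤ s) (ε : ℝ) (hε : 0 < ε)
    (w₁ w₂ : Fin q → Bool)
    (hw₁ : (Finset.univ.filter fun k => w₁ k = true).card = s)
    (hw₂ : (Finset.univ.filter fun k => w₂ k = true).card = s)
    (hham : (s : ℝ) / 2 ≤ ((Finset.univ.filter fun k => w₁ k ≠ w₂ k).card : ℝ)) :
    (s : ℝ) * q * ε ^ 2 / 2 ≤
      ∑ i : Fin (2 * q), ∑ j ∈ Finset.univ.erase i,
        (vConstr q ε w₁ i * vConstr q ε w₁ j - vConstr q ε w₂ i * vConstr q ε w₂ j) ^ 2 := by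
  classical
  set f : Fin (2 * q) → Fin (2 * q) → ℝ := fun i j =>
    (vConstr q ε w₁ i * vConstr q ε w₁ j - vConstr q ε w₂ i * vConstr q ε w₂ j) ^ 2 with hf
  have hnonneg : ∀ i j, 0 ≤ f i j := fun i j => sq_nonneg _
  have hle : q ≤ 2 * q := by omega
  set e : Fin q ↪ Fin (2 * q) :=
    ⟨fun k => ⟨q + k, by have := k.isLt; omega⟩, by
      intro a b hab
      have : q + (a : ℕ) = q + (b : ℕ) := congrArg Fin.val hab
      exact Fin.ext (by omega)⟩ with he
  set A : Finset (Fin (2 * q)) := Finset.univ.filter (fun i => (i : ℕ) < q) with hA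
  set B : Finset (Fin (2 * q)) := Finset.univ.filter (fun j => q ≤ (j : ℕ)) with hB
  have hBmap : B = Finset.univ.map e := by
    ext j
    simp only [hB, Finset.mem_filter, Finset.mem_univ, true_and, Finset.mem_map, he,
      Function.Embedding.coeFn_mk]
    constructor
    · intro hj
      exact ⟨⟨(j : ℕ) - q, by have := j.isLt; omega⟩, Fin.ext (by show q + ((j : ℕ) - q) = (j : ℕ); omega)⟩
    · rintro ⟨k, rfl⟩; show q ≤ q + (k : ℕ); omega
  have hAmap : A = Finset.univ.map (Fin.castLEEmb hle) := by
    ext i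
    simp only [hA, Finset.mem_filter, Finset.mem_univ, true_and, Finset.mem_map]
    constructor
    · intro hi
      exact ⟨⟨(i : ℕ), hi⟩, Fin.ext (by simp)⟩
    · rintro ⟨k, rfl⟩
      simpa using k.isLt
  have hAcard : A.card = q := by rw [hAmap]; simp
  have hv1 : ∀ (w : Fin q → Bool) (i : Fin (2 * q)), (i : ℕ) < q → vConstr q ε w i = 1 := by
    intro w i hi; simp [vConstr, hi]
  have hv2 : ∀ (w : Fin q → Bool) (k : Fin q),
      vConstr q ε w (e k) = ε * (if w k then 1 else 0) := by
    intro w k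
    have hk : ((e k : Fin (2 * q)) : ℕ) = q + (k : ℕ) := rfl
    have hnlt : ¬ ((e k : Fin (2 * q)) : ℕ) < q := by omega
    rw [vConstr, dif_neg hnlt]
    have h2 : (⟨((e k : Fin (2 * q)) : ℕ) - q, by have := (e k : Fin (2 * q)).isLt; omega⟩ :
        Fin q) = k := Fin.ext (by simp [hk])
    simp [h2]
  set d : ℕ := (Finset.univ.filter fun k => w₁ k ≠ w₂ k).card with hd
  have hinner : ∀ i ∈ A, ∑ j ∈ B, f i j = ε ^ 2 * d := by
    intro i hi
    have hiq : (i : ℕ) < q := by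
      have := Finset.mem_filter.mp hi; exact this.2
    rw [hBmap, Finset.sum_map]
    have hterm : ∀ k : Fin q, f i (e k) = ε ^ 2 * (if w₁ k ≠ w₂ k then 1 else 0) := by
      intro k
      simp only [hf, hv1 w₁ i hiq, hv1 w₂ i hiq, hv2, one_mul]
      rcases hb1 : w₁ k <;> rcases hb2 : w₂ k <;> simp
    rw [Finset.sum_congr rfl (fun k _ => hterm k), ← Finset.mul_sum]
    congr 1
    rw [Finset.sum_boole]
  have hmain : (q : ℝ) * (ε ^ 2 * d) ≤
      ∑ i : Fin (2 * q), ∑ j ∈ Finset.univ.erase i, f i j := by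
    have h1 : ∑ i ∈ A, ∑ j ∈ B, f i j = (q : ℝ) * (ε ^ 2 * d) := by
      rw [Finset.sum_congr rfl hinner, Finset.sum_const, hAcard, nsmul_eq_mul]
    have h2 : ∑ i ∈ A, ∑ j ∈ B, f i j ≤ ∑ i ∈ A, ∑ j ∈ Finset.univ.erase i, f i j := by
      apply Finset.sum_le_sum
      intro i hi
      apply Finset.sum_le_sum_of_subset_of_nonneg
      · intro j hj
        have hiq : (i : ℕ) < q := (Finset.mem_filter.mp hi).2
        have hjq : q ≤ (j : ℕ) := (Finset.mem_filter.mp hj).2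
        refine Finset.mem_erase.mpr ⟨?_, Finset.mem_univ _⟩
        intro hji
        rw [hji] at hjq; omega
      · intro j _ _; exact hnonneg i j
    have h3 : ∑ i ∈ A, ∑ j ∈ Finset.univ.erase i, f i j ≤
        ∑ i : Fin (2 * q), ∑ j ∈ Finset.univ.erase i, f i j := by
      apply Finset.sum_le_sum_of_subset_of_nonneg (Finset.filter_subset _ _)
      intro i _ _
      exact Finset.sum_nonneg fun j _ => hnonneg i j
    linarith
  have hdge : (s : ℝ) / 2 ≤ (d : ℝ) := hham
  have hstep : (s : ℝ) * q * ε ^ 2 / 2 ≤ (q : ℝ) * (ε ^ 2 * d) := by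
    have hq0 : (0 : ℝ) < q := by exact_mod_cast hq
    nlinarith [sq_nonneg ε, mul_pos hq0 (pow_pos hε 2)]
  calc (s : ℝ) * q * ε ^ 2 / 2 ≤ (q : ℝ) * (ε ^ 2 * d) := hstep
    _ ≤ _ := hmain
end
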